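/- Coercivity of the free energy below the critical mass: if ‖u‖_{L^1} = M < M_*, then F(u) ≥ (C_* c_{d,s}/2)(M_*^{2s/d} − M^{2s/d}) ‖u‖_{L^m}^m, and in particular F(u) ≥ 0 and any bound F(u) ≤ F(u₀) yields a uniform bound on ‖u‖_{L^m}^m. -/

import Mathlib

open MeasureTheory

noncomputable section

/-- The Riesz interaction energy `ω(u) = ∬ u(x)u(y)|x-y|^{2s-d} dx dy`. -/
def rieszEnergy (d : ℕ) (s : ℝ) (u : EuclideanSpace ℝ (Fin d) → ℝ) : ℝ :=
  ∫ x : EuclideanSpace ℝ (Fin d), ∫ y : EuclideanSpace ℝ (Fin d),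
    u x * u y * ‖x - y‖ ^ (2 * s - d) ∂volume ∂volume

/-- The free energy `F(u) = (1/(m-1)) ∫ u^m - (c/2) ω(u)`. -/
def freeEnergy (d : ℕ) (s m c : ℝ) (u : EuclideanSpace ℝ (Fin d) → ℝ) : ℝ :=
  (1 / (m - 1)) * (∫ x : EuclideanSpace ℝ (Fin d), u x ^ m ∂volume)
    - (c / 2) * rieszEnergy d s u

/-- coercivity of the free energy below the critical mass: if
`‖u‖_{L¹} = M < M_*` then `F(u) ≥ (C_* c_{d,s}/2)(M_*^{2s/d} - M^{2s/d}) ‖u‖_{L^m}^m ≥ 0`,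
and any upper bound `F(u) ≤ F₀` yields a uniform bound on `‖u‖_{L^m}^m`. -/
theorem freeEnergy_coercive_below_critical_mass
    (d : ℕ) (hd : 3 ≤ d) (s : ℝ) (hs1 : 1 < 2 * s) (hs2 : 2 * s < d)
    (m : ℝ) (hm : m = 2 - 2 * s / d)
    (c : ℝ) (hc : c = Real.Gamma ((d : ℝ) / 2 - s) /
      (Real.pi ^ ((d : ℝ) / 2) * 4 ^ s * Real.Gamma s))
    (hcpos : 0 < c)
    (Cstar : ℝ) (hCpos : 0 < Cstar)
    -- `Cstar` satisfies the variant HLS inequality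
    (hvhls : ∀ v : EuclideanSpace ℝ (Fin d) → ℝ, (∀ x, 0 ≤ v x) →
      Integrable v volume → MemLp v (ENNReal.ofReal m) volume →
      rieszEnergy d s v ≤ Cstar * (∫ x : EuclideanSpace ℝ (Fin d), v x ∂volume) ^ (2 * s / d)
        * ∫ x : EuclideanSpace ℝ (Fin d), v x ^ m ∂volume)
    (Mstar : ℝ) (hMstar : Mstar = (2 / ((m - 1) * Cstar * c)) ^ ((d : ℝ) / (2 * s)))
    (u : EuclideanSpace ℝ (Fin d) → ℝ)
    (hu0 : ∀ x, 0 ≤ u x)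
    (hu1 : Integrable u volume)
    (hum : MemLp u (ENNReal.ofReal m) volume)
    (M : ℝ) (hM : (∫ x : EuclideanSpace ℝ (Fin d), u x ∂volume) = M)
    (hMlt : M < Mstar) :
    freeEnergy d s m c u
        ≥ (Cstar * c / 2) * (Mstar ^ (2 * s / d) - M ^ (2 * s / d))
            * ∫ x : EuclideanSpace ℝ (Fin d), u x ^ m ∂volume
    ∧ 0 ≤ freeEnergy d s m c u
    ∧ ∀ F₀ : ℝ, freeEnergy d s m c u ≤ F₀ →
        (∫ x : EuclideanSpace ℝ (Fin d), u x ^ m ∂volume)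
          ≤ F₀ / ((Cstar * c / 2) * (Mstar ^ (2 * s / d) - M ^ (2 * s / d))) := by

  have hd0 : (0:ℝ) < d := by positivity
  have hs0 : (0:ℝ) < s := by linarith
  have hp : 0 < 2 * s / d := by positivity
  have hm1 : 0 < m - 1 := by
    rw [hm]
    have : 2 * s / d < 1 := (div_lt_one hd0).mpr hs2
    linarith
  have hMnn : 0 ≤ M := by
    rw [← hM]; exact integral_nonneg hu0
  have hImnn : 0 ≤ ∫ x : EuclideanSpace ℝ (Fin d), u x ^ m ∂volume :=
    integral_nonneg fun x => Real.rpow_nonneg (hu0 x) m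
  have hbase : 0 < 2 / ((m - 1) * Cstar * c) := by positivity
  have hMs : Mstar ^ (2 * s / d) = 2 / ((m - 1) * Cstar * c) := by
    rw [hMstar]
    rw [← Real.rpow_mul hbase.le]
    rw [show (d : ℝ) / (2 * s) * (2 * s / d) = 1 by
      field_simp]
    exact Real.rpow_one _
  have hMstarnn : 0 ≤ Mstar := le_trans hMnn hMlt.le
  have hKey : 1 / (m - 1) = Cstar * c / 2 * Mstar ^ (2 * s / d) := by
    rw [hMs]; field_simp
  have hpow : M ^ (2 * s / d) < Mstar ^ (2 * s / d) :=
    Real.rpow_lt_rpow hMnn hMlt hp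
  have hK : 0 < (Cstar * c / 2) * (Mstar ^ (2 * s / d) - M ^ (2 * s / d)) := by
    have : 0 < Cstar * c / 2 := by positivity
    nlinarith
  have hω := hvhls u hu0 hu1 hum
  rw [hM] at hω
  have hmain : freeEnergy d s m c u
      ≥ (Cstar * c / 2) * (Mstar ^ (2 * s / d) - M ^ (2 * s / d))
          * ∫ x : EuclideanSpace ℝ (Fin d), u x ^ m ∂volume := by
    unfold freeEnergy
    nlinarith [mul_le_mul_of_nonneg_left hω (le_of_lt (by positivity : (0:ℝ) < c / 2))]
  refine ⟨hmain, le_trans (by positivity) hmain, fun F₀ hF₀ => ?_⟩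
  rw [le_div_iff₀ hK]
  nlinarith
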